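/- (Quadratic Recurrence, part (a).) For every integer N ≥ 2 and every fixed t ∈ ℝ, the recurrence defining F_N(t,β) is well-defined for all β ∈ ℂ with Re(β) > −2/N (in particular, for t ≠ 0 the denominator sinh((t/2)[(N + (N(N−1)/2)β) − 1]) is nonzero, and for t = 0 the denominator (N + (N(N−1)/2)β) − 1 is nonzero), and the function β ↦ F_N(t,β) is holomorphic on the half-plane {β ∈ ℂ : Re(β) > −2/N}. -/

import Mathlib

open MeasureTheory
open scoped LinearAlgebra.Projectivization

namespace LogCoulomb

noncomputable section

/-! ### The projective line over `ℚ_p`, its spherical metric and `PGL₂`-invariant measure -/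

variable (p : ℕ) [Fact p.Prime]

instance : MeasurableSpace ℚ_[p] := borel _
instance : BorelSpace ℚ_[p] := ⟨rfl⟩

/-- The projective line over `ℚ_p`. -/
abbrev P1 := ℙ ℚ_[p] (Fin 2 → ℚ_[p])

instance : TopologicalSpace (P1 p) :=
  inferInstanceAs (TopologicalSpace (Quotient _))

instance : MeasurableSpace (P1 p) := borel _
instance : BorelSpace (P1 p) := ⟨rfl⟩

/-- Spherical distance on homogeneous coordinates:
`δ((x₀,x₁),(y₀,y₁)) = |x₀y₁ - x₁y₀| / (max(|x₀|,|x₁|) ⬝ max(|y₀|,|y₁|))`. -/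
def sdelta (x y : Fin 2 → ℚ_[p]) : ℝ :=
  ‖x 0 * y 1 - x 1 * y 0‖ / (max ‖x 0‖ ‖x 1‖ * max ‖y 0‖ ‖y 1‖)

/-- The spherical metric on `ℙ¹(ℚ_p)`, defined via the canonical representatives. -/
def pdelta (ξ η : P1 p) : ℝ := sdelta p ξ.rep η.rep

open Classical in
/-- The action of a matrix on `ℙ¹(ℚ_p)`: `[x₀:x₁] ↦ [a x₀ + b x₁ : c x₀ + d x₁]`
(well-defined, and given by the first branch of the `if`, whenever `A` is invertible). -/
def mobius (A : Matrix (Fin 2) (Fin 2) ℚ_[p]) (ξ : P1 p) : P1 p :=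
  if h : A.mulVec ξ.rep ≠ 0 then Projectivization.mk ℚ_[p] (A.mulVec ξ.rep) h else ξ

/-- `ν` is invariant under the action of `GL₂(ℤ_p)` on `ℙ¹(ℚ_p)`; membership of the matrix
entries in `ℤ_p`, and invertibility of the matrix over `ℤ_p`, are phrased via the `p`-adic
norm on `ℚ_p`. -/
def IsGLInvariant (ν : Measure (P1 p)) : Prop :=
  ∀ A : Matrix (Fin 2) (Fin 2) ℚ_[p],
    (∀ i j, ‖A i j‖ ≤ 1) → ‖A.det‖ = 1 →
      ∀ M : Set (P1 p), MeasurableSet M → ν (mobius p A '' M) = ν M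

/-- The embedding `ι : ℚ_p → ℙ¹(ℚ_p)`, `x ↦ [x : 1]`. -/
def iota (x : ℚ_[p]) : P1 p :=
  Projectivization.mk ℚ_[p] ![x, 1] (by
    intro h
    have h1 := congrFun h 1
    simp at h1)

/-! ### Canonical partition functions -/

/-- The pairs `(i,j)` with `i < j`. -/
def pairs (N : ℕ) : Finset (Fin N × Fin N) := Finset.univ.filter fun q => q.1 < q.2

/-- The closed unit ball `ℤ_p = R` inside `ℚ_p`. -/
def Zball : Set ℚ_[p] := {x | ‖x‖ ≤ 1}

/-- The open unit ball `pℤ_p = P` inside `ℚ_p`. -/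
def Pball : Set ℚ_[p] := {x | ‖x‖ < 1}

/-- The one-component canonical partition function
`Z_N(X, β) = ∫_{X^N} ∏_{i<j} |x_i - x_j|^β dμ^N` (as a Bochner integral, whether or not it
converges absolutely). -/
def ZN (μ : Measure ℚ_[p]) [SigmaFinite μ] (X : Set ℚ_[p]) (N : ℕ) (β : ℂ) : ℂ :=
  ∫ x : Fin N → ℚ_[p], ∏ q ∈ pairs N, (‖x q.1 - x q.2‖ : ℂ) ^ β
    ∂(Measure.pi fun _ => μ.restrict X)

/-- The multivariate canonical partition function
`𝒵_I(X, s) = ∫_{X^I} ∏_{i<j, i,j ∈ I} |x_i - x_j|^{s_{ij}} dμ^I` for a subset `I ⊆ [N]`. -/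
def ZI (μ : Measure ℚ_[p]) [SigmaFinite μ] (X : Set ℚ_[p]) {N : ℕ} (I : Finset (Fin N))
    (s : Fin N → Fin N → ℂ) : ℂ :=
  ∫ x : I → ℚ_[p],
    ∏ q ∈ Finset.univ.filter (fun q : (↥I) × (↥I) => (q.1 : Fin N) < (q.2 : Fin N)),
      (‖x q.1 - x q.2‖ : ℂ) ^ s q.1.1 q.2.1
    ∂(Measure.pi fun _ => μ.restrict X)

/-- The multivariate canonical partition function
`𝒵_N(ℙ¹(ℚ_p), s) = ∫_{(ℙ¹(ℚ_p))^N} ∏_{i<j} δ(ξ_i,ξ_j)^{s_{ij}} dν^N`. -/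
def ZP1s (ν : Measure (P1 p)) [SigmaFinite ν] (N : ℕ) (s : Fin N → Fin N → ℂ) : ℂ :=
  ∫ x : Fin N → P1 p, ∏ q ∈ pairs N, ((pdelta p (x q.1) (x q.2) : ℝ) : ℂ) ^ s q.1 q.2
    ∂(Measure.pi fun _ => ν)

/-- The one-component canonical partition function `Z_N(ℙ¹(ℚ_p), β)`. -/
def ZP1 (ν : Measure (P1 p)) [SigmaFinite ν] (N : ℕ) (β : ℂ) : ℂ :=
  ∫ x : Fin N → P1 p, ∏ q ∈ pairs N, ((pdelta p (x q.1) (x q.2) : ℝ) : ℂ) ^ β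
    ∂(Measure.pi fun _ => ν)

/-! ### The quadratic recurrence -/

/-- The factor `ρ_{N,k}(t,β)` appearing in the quadratic recurrence; here
`N.choose 2 = N(N-1)/2`. -/
def rho (N k : ℕ) (t : ℝ) (β : ℂ) : ℂ :=
  if t = 0 then
    (((N : ℂ) + (N.choose 2 : ℂ) * β) * (1 - 2 * (k : ℂ) / (N : ℂ)) + 1) /
      (((N : ℂ) + (N.choose 2 : ℂ) * β) - 1)
  else
    Complex.sinh (((t : ℂ) / 2) * (((N : ℂ) + (N.choose 2 : ℂ) * β) * (1 - 2 * (k : ℂ) / (N : ℂ)) + 1)) /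
      Complex.sinh (((t : ℂ) / 2) * (((N : ℂ) + (N.choose 2 : ℂ) * β) - 1))

/-- The quadratic recurrence: `F 0 = F 1 = 1` and
`F N t β = ∑_{k=1}^{N-1} (k/N) ρ_{N,k}(t,β) F_{N-k}(t,β) F_k(t,β)` for `N ≥ 2`. -/
def F : ℕ → ℝ → ℂ → ℂ
  | 0, _, _ => 1
  | 1, _, _ => 1
  | N + 2, t, β =>
    ∑ k ∈ (Finset.Icc 1 (N + 1)).attach,
      (((k : ℕ) : ℂ) / ((N : ℂ) + 2)) * rho (N + 2) k t β *
        F (N + 2 - (k : ℕ)) t β * F (k : ℕ) t β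
  decreasing_by
  all_goals
    have hk := Finset.mem_Icc.mp k.2
    omega

/-! ### Splitting chains -/

/-- A splitting chain `Λ_0 > Λ_1 > ⋯ > Λ_L` of set partitions of the subset `I ⊆ [N]`,
beginning with the trivial partition `{I}` and ending with the partition of `I` into
singletons.  (The values `Λ ℓ` for `ℓ > L` are required to be `∅`, so that a chain is
determined by the genuine data `Λ_0, …, Λ_L`.) -/
structure SplChain (N : ℕ) (I : Finset (Fin N)) where
  L : ℕ
  Λ : ℕ → Finset (Finset (Fin N))
  nonempty_mem : ∀ ℓ ≤ L, ∀ B ∈ Λ ℓ, B.Nonempty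
  subset_mem : ∀ ℓ ≤ L, ∀ B ∈ Λ ℓ, B ⊆ I
  cover : ∀ ℓ ≤ L, ∀ i ∈ I, ∃! B, B ∈ Λ ℓ ∧ i ∈ B
  first : Λ 0 = {I}
  last : Λ L = I.image fun i => {i}
  refines : ∀ ℓ < L, ∀ B ∈ Λ (ℓ + 1), ∃ C ∈ Λ ℓ, B ⊆ C
  strict : ∀ ℓ < L, Λ (ℓ + 1) ≠ Λ ℓ
  trailing : ∀ ℓ, L < ℓ → Λ ℓ = ∅

variable {N : ℕ} {I : Finset (Fin N)}

/-- The branches of a splitting chain: the non-singleton parts,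
`ℬ(𝔖) = (Λ_0 ∪ ⋯ ∪ Λ_{L-1}) \ Λ_L`. -/
def SplChain.branches (S : SplChain N I) : Finset (Finset (Fin N)) :=
  ((Finset.range S.L).biUnion S.Λ) \ S.Λ S.L

/-- The depth `ℓ_𝔖(λ) = max {ℓ : λ ∈ Λ_ℓ}` of a branch. -/
def SplChain.depth (S : SplChain N I) (lam : Finset (Fin N)) : ℕ :=
  ((Finset.range (S.L + 1)).filter fun ℓ => lam ∈ S.Λ ℓ).sup id

/-- The degree `deg_𝔖(λ) = #{λ' ∈ Λ_{ℓ_𝔖(λ)+1} : λ' ⊆ λ}` of a branch. -/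
def SplChain.degree (S : SplChain N I) (lam : Finset (Fin N)) : ℕ :=
  ((S.Λ (S.depth lam + 1)).filter fun lam' => lam' ⊆ lam).card

/-- A splitting chain is reduced if every branch appears in exactly one partition of the
chain (namely the one at its depth). -/
def SplChain.Reduced (S : SplChain N I) : Prop :=
  ∀ lam ∈ S.branches, ∀ ℓ ≤ S.L, (lam ∈ S.Λ ℓ ↔ ℓ = S.depth lam)

/-- `e_λ(s) = #λ - 1 + ∑_{i<j, i,j ∈ λ} s_{ij}`. -/
def eexp (lam : Finset (Fin N)) (s : Fin N → Fin N → ℂ) : ℂ :=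
  (lam.card : ℂ) - 1 + ∑ q ∈ (pairs N).filter fun q => q.1 ∈ lam ∧ q.2 ∈ lam, s q.1 q.2

/-- Membership in `Ω_I`: `Re e_λ(s) > 0` for every `λ ⊆ I` with `#λ > 1`. -/
def InOmega (I : Finset (Fin N)) (s : Fin N → Fin N → ℂ) : Prop :=
  ∀ lam ⊆ I, 1 < lam.card → 0 < (eexp lam s).re


/-- The multivariate canonical partition function `𝒵_N(ℤ_p, s)` over `Fin N`-indexed tuples. -/
def ZNs (μ : Measure ℚ_[p]) [SigmaFinite μ] (X : Set ℚ_[p]) (N : ℕ)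
    (s : Fin N → Fin N → ℂ) : ℂ :=
  ∫ x : Fin N → ℚ_[p], ∏ q ∈ pairs N, (‖x q.1 - x q.2‖ : ℂ) ^ s q.1 q.2
    ∂(Measure.pi fun _ => μ.restrict X)

/-- The ball `p^v ℤ_p = {x : |x| ≤ p^{-v}}` in `ℚ_p`. -/
def pvball (v : ℤ) : Set ℚ_[p] := {x | ‖x‖ ≤ (p : ℝ) ^ (-v)}

/-- `G_N(q,β) = N! q^{(1/2)(N choose 2)β} F_N(log q, β)`. -/
def GN (N : ℕ) (β : ℂ) (q : ℝ) : ℂ :=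
  (N.factorial : ℂ) * (q : ℂ) ^ ((N.choose 2 : ℂ) * β / 2) * F N (Real.log q) β

/-- `H_N(q,β)`, the efficient formula for `Z_N(ℙ¹(K),β)` as a function of `q`. -/
def HN (N : ℕ) (β : ℂ) (q : ℝ) : ℂ :=
  (N.factorial : ℂ) * ∑ k ∈ Finset.range (N + 1),
    Complex.cosh (((Real.log q : ℂ) / 2) * ((N : ℂ) + (N.choose 2 : ℂ) * β) *
          (1 - 2 * (k : ℂ) / (N : ℂ))) /
        (2 * Complex.cosh ((Real.log q : ℂ) / 2)) ^ N *
      F (N - k) (Real.log q) β * F k (Real.log q) β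

end


lemma aux_sinh_ne_zero_of_re_ne_zero {z : ℂ} (hz : z.re ≠ 0) : Complex.sinh z ≠ 0 := by
  intro h
  rw [Complex.sinh, div_eq_zero_iff, sub_eq_zero] at h
  rcases h with h | h
  · rw [Complex.exp_eq_exp_iff_exists_int] at h
    obtain ⟨n, hn⟩ := h
    have := congrArg Complex.re hn
    simp [Complex.add_re, Complex.neg_re, Complex.mul_re] at this
    exact hz (by linarith)
  · norm_num at h

lemma aux_key_pos {N M : ℕ} (hM : 2 ≤ M) (hMN : M ≤ N) {β : ℂ} (hβ : -2 / (N:ℝ) < β.re) :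
    0 < (M:ℝ) - 1 + (M.choose 2 : ℝ) * β.re := by
  have hM0 : (0:ℝ) < M := by positivity
  have hN0 : (0:ℝ) < N := by
    have : (0:ℕ) < N := lt_of_lt_of_le (by norm_num) (le_trans hM hMN)
    exact_mod_cast this
  have hMN' : (M:ℝ) ≤ N := by exact_mod_cast hMN
  have h1 : -2 / (M:ℝ) ≤ -2 / (N:ℝ) := by
    rw [div_le_div_iff₀ hM0 hN0]; nlinarith
  have hβ' : -2 / (M:ℝ) < β.re := lt_of_le_of_lt h1 hβ
  have hch : (M.choose 2 : ℝ) = (M:ℝ) * ((M:ℝ) - 1) / 2 := by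
    exact_mod_cast Nat.cast_choose_two (K := ℝ) M
  have hM1 : (1:ℝ) ≤ (M:ℝ) - 1 := by
    have : (2:ℝ) ≤ M := by exact_mod_cast hM
    linarith
  have h2 : -2 / (M:ℝ) * (M.choose 2 : ℝ) = -((M:ℝ) - 1) := by
    rw [hch]; field_simp
  nlinarith [mul_lt_mul_of_pos_right hβ' (show (0:ℝ) < (M.choose 2 : ℝ) by nlinarith)]

lemma aux_denom_re {M : ℕ} (β : ℂ) :
    (((M : ℂ) + (M.choose 2 : ℂ) * β) - 1).re = (M:ℝ) - 1 + (M.choose 2 : ℝ) * β.re := by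
  simp [Complex.add_re, Complex.sub_re, Complex.mul_re]
  ring

lemma aux_denom_ne_zero {N M : ℕ} (hM : 2 ≤ M) (hMN : M ≤ N) {β : ℂ} (hβ : -2 / (N:ℝ) < β.re) :
    ((M : ℂ) + (M.choose 2 : ℂ) * β) - 1 ≠ 0 := by
  intro h
  have := congrArg Complex.re h
  rw [aux_denom_re] at this
  simp at this
  exact absurd this (ne_of_gt (aux_key_pos hM hMN hβ))

lemma aux_sinh_denom_ne_zero {N M : ℕ} (hM : 2 ≤ M) (hMN : M ≤ N) {β : ℂ} (hβ : -2 / (N:ℝ) < β.re)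
    {t : ℝ} (ht : t ≠ 0) :
    Complex.sinh (((t : ℂ) / 2) * (((M : ℂ) + (M.choose 2 : ℂ) * β) - 1)) ≠ 0 := by
  apply aux_sinh_ne_zero_of_re_ne_zero
  have : (((t : ℂ) / 2) * (((M : ℂ) + (M.choose 2 : ℂ) * β) - 1)).re
      = (t / 2) * ((M:ℝ) - 1 + (M.choose 2 : ℝ) * β.re) := by
    rw [show ((t:ℂ)/2) = ((t/2 : ℝ) : ℂ) by push_cast; ring, Complex.re_ofReal_mul, aux_denom_re]
  rw [this]
  exact mul_ne_zero (by simpa using ht) (ne_of_gt (aux_key_pos hM hMN hβ))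

lemma aux_rho_diffOn {N M : ℕ} (k : ℕ) (t : ℝ) (hM : 2 ≤ M) (hMN : M ≤ N) :
    DifferentiableOn ℂ (fun β => rho M k t β) {β : ℂ | -2 / (N:ℝ) < β.re} := by
  unfold rho
  split_ifs with ht
  · apply DifferentiableOn.div
    · fun_prop
    · fun_prop
    · intro β hβ
      exact aux_denom_ne_zero hM hMN hβ
  · apply DifferentiableOn.div
    · apply DifferentiableOn.csinh; fun_prop
    · apply DifferentiableOn.csinh; fun_prop
    · intro β hβ
      exact aux_sinh_denom_ne_zero hM hMN hβ ht

lemma aux_F_diffOn (N : ℕ) (t : ℝ) (M : ℕ) (hMN : M ≤ N) :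
    DifferentiableOn ℂ (fun β => F M t β) {β : ℂ | -2 / (N:ℝ) < β.re} := by
  induction M using Nat.strong_induction_on with
  | _ M ih =>
    match M, hMN with
    | 0, _ => simp only [F]; exact differentiableOn_const 1
    | 1, _ => simp only [F]; exact differentiableOn_const 1
    | (m+2), hMN =>
      have heq : (fun β => F (m+2) t β) = fun β =>
          ∑ k ∈ (Finset.Icc 1 (m + 1)).attach,
            (((k : ℕ) : ℂ) / ((m : ℂ) + 2)) * rho (m + 2) k t β *
              F (m + 2 - (k : ℕ)) t β * F (k : ℕ) t β := by
        funext β; rw [F]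
      rw [heq]
      apply DifferentiableOn.fun_sum
      intro k _
      have hk := Finset.mem_Icc.mp k.2
      apply DifferentiableOn.mul
      apply DifferentiableOn.mul
      · exact (differentiableOn_const _).mul (aux_rho_diffOn k t (by omega) hMN)
      · exact ih (m + 2 - (k:ℕ)) (by omega) (by omega)
      · exact ih (k:ℕ) (by omega) (by omega)

theorem statement_5 (N : ℕ) (hN : 2 ≤ N) (t : ℝ) :
    (∀ M : ℕ, 2 ≤ M → M ≤ N → ∀ β : ℂ, -2 / (N : ℝ) < β.re →
      (t ≠ 0 →
        Complex.sinh (((t : ℂ) / 2) * (((M : ℂ) + (M.choose 2 : ℂ) * β) - 1)) ≠ 0) ∧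
      (t = 0 → ((M : ℂ) + (M.choose 2 : ℂ) * β) - 1 ≠ 0)) ∧
    DifferentiableOn ℂ (fun β : ℂ => F N t β) {β : ℂ | -2 / (N : ℝ) < β.re} := by
  constructor
  · intro M hM2 hMN β hβ
    exact ⟨fun ht => aux_sinh_denom_ne_zero hM2 hMN hβ ht,
      fun _ => aux_denom_ne_zero hM2 hMN hβ⟩
  · exact aux_F_diffOn N t N le_rfl

end LogCoulomb
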